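/- Let (Ω, P) be a probability space, let A : [0,1] → [1/2, 1], and let Z₁, Z₂ : Ω → ℝ be random variables with Z₁ > 0 and Z₂ > 0 almost surely whose joint distribution satisfies P(Z₁ ≤ z₁, Z₂ ≤ z₂) = exp{−(1/z₁ + 1/z₂) A(z₁/(z₁+z₂))} for all z₁, z₂ > 0. Fix ω ∈ (0,1), set λ₁ = ω(1/ω + 1/(1−ω)) = 1/(1−ω) and λ₂ = (1−ω)(1/ω + 1/(1−ω)) = 1/ω, let H(x) = e^{−1/x} for x > 0, and define Y := max{H(Z₁)^{λ₁}, H(Z₂)^{λ₂}}. Then P(Y ≤ y) = y^{A(ω)} for all y ∈ (0,1); that is, Y has the Beta(A(ω), 1) distribution. -/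

import Mathlib

open MeasureTheory Real

lemma aux_iff (z lam y c : ℝ) (hz : 0 < z) (hlam : 0 < lam) (hy : 0 < y)
    (hc : c = -Real.log y) (hcpos : 0 < c) :
    Real.exp (-(1 / z)) ^ lam ≤ y ↔ z ≤ lam / c := by
  have h1 : Real.exp (-(1 / z)) ^ lam = Real.exp (-(lam / z)) := by
    rw [Real.rpow_def_of_pos (Real.exp_pos _), Real.log_exp]
    ring_nf
  rw [h1, show y = Real.exp (Real.log y) from (Real.exp_log hy).symm, Real.exp_le_exp,
    neg_le, ← hc]
  rw [le_div_iff₀ hz, le_div_iff₀ hcpos]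
  constructor <;> intro h <;> linarith

/-- Max-projection of Mhalla et al.: for a bivariate simple max-stable vector with Pickands
dependence function `A` and `ω ∈ (0,1)`, with `λ₁ = 1/(1-ω)`, `λ₂ = 1/ω` and `H(x) = e^{-1/x}`,
the variable `Y = max(H(Z₁)^{λ₁}, H(Z₂)^{λ₂})` satisfies `P(Y ≤ y) = y^{A(ω)}` on `(0,1)`,
i.e. `Y ∼ Beta(A(ω), 1)`. -/
theorem stmt_6 {Ω : Type*} [MeasurableSpace Ω] (P : Measure Ω) [IsProbabilityMeasure P]
    (A : ℝ → ℝ) (hA : ∀ t ∈ Set.Icc (0 : ℝ) 1, A t ∈ Set.Icc (1 / 2 : ℝ) 1)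
    (Z₁ Z₂ : Ω → ℝ) (hZ₁meas : Measurable Z₁) (hZ₂meas : Measurable Z₂)
    (hZ₁pos : ∀ᵐ o ∂P, 0 < Z₁ o) (hZ₂pos : ∀ᵐ o ∂P, 0 < Z₂ o)
    (hjoint : ∀ z₁ z₂ : ℝ, 0 < z₁ → 0 < z₂ →
      P {o | Z₁ o ≤ z₁ ∧ Z₂ o ≤ z₂} =
        ENNReal.ofReal (Real.exp (-((1 / z₁ + 1 / z₂) * A (z₁ / (z₁ + z₂))))))
    (ω : ℝ) (hω : ω ∈ Set.Ioo (0 : ℝ) 1)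
    (lam₁ lam₂ : ℝ) (hlam₁ : lam₁ = ω * (1 / ω + 1 / (1 - ω)))
    (hlam₂ : lam₂ = (1 - ω) * (1 / ω + 1 / (1 - ω)))
    (H : ℝ → ℝ) (hH : ∀ x : ℝ, H x = Real.exp (-(1 / x)))
    (Y : Ω → ℝ)
    (hY : Y = fun o => max (H (Z₁ o) ^ lam₁) (H (Z₂ o) ^ lam₂)) :
    ∀ y ∈ Set.Ioo (0 : ℝ) 1, P {o | Y o ≤ y} = ENNReal.ofReal (y ^ A ω) := by
  obtain ⟨hω0, hω1⟩ := hω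
  have hω1' : 0 < 1 - ω := by linarith
  have hl1 : lam₁ = 1 / (1 - ω) := by rw [hlam₁]; field_simp; ring
  have hl2 : lam₂ = 1 / ω := by rw [hlam₂]; field_simp; ring_nf
  have hl1pos : 0 < lam₁ := by rw [hl1]; positivity
  have hl2pos : 0 < lam₂ := by rw [hl2]; positivity
  intro y hy
  obtain ⟨hy0, hy1⟩ := hy
  set c : ℝ := -Real.log y with hc
  have hcpos : 0 < c := by
    have := Real.log_neg hy0 hy1
    simp [hc]; linarith
  set z₁ : ℝ := lam₁ / c with hz₁
  set z₂ : ℝ := lam₂ / c with hz₂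
  have hz₁pos : 0 < z₁ := by positivity
  have hz₂pos : 0 < z₂ := by positivity
  have hsets : {o | Y o ≤ y} =ᵐ[P] {o | Z₁ o ≤ z₁ ∧ Z₂ o ≤ z₂} := by
    filter_upwards [hZ₁pos, hZ₂pos] with o h1 h2
    have e1 : (H (Z₁ o) ^ lam₁ ≤ y) ↔ Z₁ o ≤ z₁ := by
      rw [hH]; exact aux_iff _ _ _ _ h1 hl1pos hy0 hc hcpos
    have e2 : (H (Z₂ o) ^ lam₂ ≤ y) ↔ Z₂ o ≤ z₂ := by
      rw [hH]; exact aux_iff _ _ _ _ h2 hl2pos hy0 hc hcpos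
    show (Y o ≤ y) = (Z₁ o ≤ z₁ ∧ Z₂ o ≤ z₂)
    rw [eq_iff_iff, hY]
    simp only [max_le_iff]
    rw [e1, e2]
  rw [measure_congr hsets, hjoint _ _ hz₁pos hz₂pos]
  have hratio : z₁ / (z₁ + z₂) = ω := by
    rw [div_eq_iff (by positivity : z₁ + z₂ ≠ 0), hz₁, hz₂, hl1, hl2]
    have h1 : ω ≠ 0 := hω0.ne'
    have h2 : (1 - ω) ≠ 0 := hω1'.ne'
    have h3 : c ≠ 0 := hcpos.ne'
    field_simp
    ring
  have hsum : 1 / z₁ + 1 / z₂ = c := by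
    rw [hz₁, hz₂, hl1, hl2]
    rw [one_div_div, one_div_div]
    field_simp
    ring
  rw [hratio, hsum]
  congr 1
  rw [Real.rpow_def_of_pos hy0]
  congr 1
  rw [hc]; ring
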